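/- Let d ≥ 1, σ > 0 and a ≥ 0. If X = (X_1, …, X_d) is a random vector in ℝ^d whose distribution is the product of d independent Gaussian distributions N(0, σ²), then Pr[Σ_{i=1}^d X_i² ≥ σ²·(d + 2√(d·a) + 2a)] ≤ exp(−a). (Tail bound for the chi-squared distribution with d degrees of freedom, used to control the norms of the Gaussian noise vectors.) -/

import Mathlib

open MeasureTheory ProbabilityTheory

section aux
open Real

lemma gauss_sq_exp_integrable (v : NNReal) (hv : 0 < v) (t : ℝ) (ht : 2 * t * v < 1) :
    Integrable (fun x : ℝ => Real.exp (t * x ^ 2)) (gaussianReal 0 v) := by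
  have hb : 0 < (2 * (v : ℝ))⁻¹ - t := by
    rw [sub_pos, inv_eq_one_div, lt_div_iff₀ (by positivity)]
    linarith [ht]
  have hrepr : gaussianReal 0 v
      = volume.withDensity (fun x => ((gaussianPDFReal 0 v x).toNNReal : ENNReal)) := by
    rw [gaussianReal_of_var_ne_zero _ hv.ne']; rfl
  rw [hrepr, integrable_withDensity_iff_integrable_smul
    ((measurable_gaussianPDFReal 0 v).real_toNNReal)]
  have heq : (fun x : ℝ => ((gaussianPDFReal 0 v x).toNNReal) • Real.exp (t * x ^ 2))
      = fun x : ℝ => (Real.sqrt (2 * Real.pi * v))⁻¹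
          * Real.exp (-((2 * (v : ℝ))⁻¹ - t) * x ^ 2) := by
    ext x
    rw [NNReal.smul_def, smul_eq_mul,
      Real.coe_toNNReal _ (gaussianPDFReal_nonneg 0 v x), gaussianPDFReal,
      mul_assoc, ← Real.exp_add]
    congr 2
    field_simp
    ring
  rw [heq]
  exact (integrable_exp_neg_mul_sq hb).const_mul _

lemma gauss_sq_exp_integral (v : NNReal) (hv : 0 < v) (t : ℝ) (ht : 2 * t * v < 1) :
    ∫ x, Real.exp (t * x ^ 2) ∂(gaussianReal 0 v)
      = (Real.sqrt (1 - 2 * t * v))⁻¹ := by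
  have hb : 0 < (2 * (v : ℝ))⁻¹ - t := by
    rw [sub_pos, inv_eq_one_div, lt_div_iff₀ (by positivity)]
    linarith [ht]
  have hrepr : gaussianReal 0 v
      = volume.withDensity (fun x => ((gaussianPDFReal 0 v x).toNNReal : ENNReal)) := by
    rw [gaussianReal_of_var_ne_zero _ hv.ne']; rfl
  rw [hrepr, integral_withDensity_eq_integral_smul
    ((measurable_gaussianPDFReal 0 v).real_toNNReal)]
  have heq : (fun x : ℝ => ((gaussianPDFReal 0 v x).toNNReal) • Real.exp (t * x ^ 2))
      = fun x : ℝ => (Real.sqrt (2 * Real.pi * v))⁻¹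
          * Real.exp (-((2 * (v : ℝ))⁻¹ - t) * x ^ 2) := by
    ext x
    rw [NNReal.smul_def, smul_eq_mul,
      Real.coe_toNNReal _ (gaussianPDFReal_nonneg 0 v x), gaussianPDFReal,
      mul_assoc, ← Real.exp_add]
    congr 2
    field_simp
    ring
  rw [heq, integral_const_mul, integral_gaussian]
  rw [← Real.sqrt_inv, ← Real.sqrt_mul (by positivity), ← Real.sqrt_inv]
  congr 1
  have hπ := Real.pi_pos
  have hv' : (0:ℝ) < v := hv
  have h2 : (1:ℝ) - 2 * t * v ≠ 0 := by nlinarith [ht]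
  have h3 : π * (v:ℝ) * 2 - π * (v:ℝ) ^ 2 * t * 4 ≠ 0 := by
    have h4 : π * (v:ℝ) * 2 - π * (v:ℝ) ^ 2 * t * 4 = (π * v * 2) * (1 - 2 * t * v) := by ring
    rw [h4]
    exact mul_ne_zero (by positivity) h2
  field_simp

end aux

set_option maxHeartbeats 1000000 in
/-- Chi-squared tail bound: if `X` has independent `N(0,σ²)` coordinates in `ℝ^d`,
then `Pr[Σ Xᵢ² ≥ σ²(d + 2√(d·a) + 2a)] ≤ exp(-a)`. -/
theorem stmt_10 (d : ℕ) (hd : 1 ≤ d) (σ a : ℝ) (hσ : 0 < σ) (ha : 0 ≤ a) :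
    (Measure.pi fun _ : Fin d => gaussianReal 0 ((σ ^ 2).toNNReal))
        {x : Fin d → ℝ |
          σ ^ 2 * ((d : ℝ) + 2 * Real.sqrt (d * a) + 2 * a) ≤ ∑ i, x i ^ 2}
      ≤ ENNReal.ofReal (Real.exp (-a)) := by
  have hσ2 : (0:ℝ) < σ ^ 2 := by positivity
  set v : NNReal := (σ ^ 2).toNNReal with hv_def
  have hvpos : 0 < v := Real.toNNReal_pos.mpr hσ2
  have hvc : (v : ℝ) = σ ^ 2 := Real.coe_toNNReal _ hσ2.le
  have hd1 : (1:ℝ) ≤ d := by exact_mod_cast hd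
  have hdpos : (0:ℝ) < d := by linarith
  set s : ℝ := Real.sqrt ((d : ℝ) * a) with hs_def
  have hs : 0 ≤ s := Real.sqrt_nonneg _
  have hs2 : s ^ 2 = d * a := Real.sq_sqrt (by positivity)
  set u : ℝ := 2 * s + 2 * a with hu_def
  have hu : 0 ≤ u := by positivity
  have hud : (0:ℝ) < u + d := by linarith
  set lam : ℝ := u / (2 * (u + d)) with hlam_def
  have hlam0 : 0 ≤ lam := by positivity
  set t : ℝ := lam / σ ^ 2 with ht_def
  have ht0 : 0 ≤ t := by positivity
  have htv' : 2 * t * (v:ℝ) = u / (u + d) := by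
    rw [ht_def, hvc, hlam_def]
    field_simp
  have htv : 2 * t * (v:ℝ) < 1 := by
    rw [htv', div_lt_one hud]; linarith
  have h1m : 1 - 2 * t * (v:ℝ) = d / (u + d) := by
    rw [htv']; field_simp; ring
  -- the pi measure
  letI : MeasureSpace ℝ := MeasureSpace.mk (gaussianReal 0 v)
  have hvol : (volume : Measure ℝ) = gaussianReal 0 v := rfl
  haveI : IsProbabilityMeasure (volume : Measure ℝ) := by
    rw [hvol]; infer_instance
  haveI : SigmaFinite (volume : Measure ℝ) := inferInstance
  set μpi : Measure (Fin d → ℝ) := Measure.pi fun _ : Fin d => gaussianReal 0 v with hμ_def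
  haveI : IsProbabilityMeasure μpi := by
    rw [hμ_def]; infer_instance
  have hprod : (fun x : Fin d → ℝ => Real.exp (t * ∑ i, x i ^ 2))
      = fun x : Fin d → ℝ => ∏ i, Real.exp (t * x i ^ 2) := by
    ext x
    rw [Finset.mul_sum, Real.exp_sum]
  have h_int : Integrable (fun x : Fin d → ℝ => Real.exp (t * ∑ i, x i ^ 2)) μpi := by
    rw [hprod]
    exact MeasureTheory.Integrable.fintype_prod (f := fun _ : Fin d => fun y : ℝ =>
      Real.exp (t * y ^ 2)) (fun i => gauss_sq_exp_integrable v hvpos t htv)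
  have h_mgf : mgf (fun x : Fin d → ℝ => ∑ i, x i ^ 2) μpi t
      = ((Real.sqrt (1 - 2 * t * (v:ℝ)))⁻¹) ^ d := by
    rw [mgf, ← gauss_sq_exp_integral v hvpos t htv]
    calc ∫ x, Real.exp (t * ∑ i, x i ^ 2) ∂μpi
        = ∫ x : Fin d → ℝ, ∏ i, Real.exp (t * x i ^ 2) := by rw [hprod]; rfl
      _ = (∫ x : ℝ, Real.exp (t * x ^ 2)) ^ (Fintype.card (Fin d)) :=
          MeasureTheory.integral_fintype_prod_eq_pow (ι := Fin d)
            (fun y : ℝ => Real.exp (t * y ^ 2))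
      _ = (∫ x, Real.exp (t * x ^ 2) ∂(gaussianReal 0 v)) ^ d := by
          rw [Fintype.card_fin]; rfl
  have hch := measure_ge_le_exp_mul_mgf (μ := μpi)
    (X := fun x : Fin d → ℝ => ∑ i, x i ^ 2)
    (σ ^ 2 * ((d : ℝ) + 2 * s + 2 * a)) ht0 h_int
  rw [h_mgf, h1m] at hch
  -- numeric part
  have hte : t * (σ ^ 2 * ((d : ℝ) + 2 * s + 2 * a)) = u / 2 := by
    rw [ht_def, hlam_def]
    field_simp
    ring
  have hkey : Real.sqrt ((u + d) / d) ≤ Real.exp (s / d) := by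
    have hq := Real.quadratic_le_exp_of_nonneg (x := 2 * s / d) (by positivity)
    have h2 : (u + d) / d ≤ Real.exp (s / d) ^ 2 := by
      have hexp2 : Real.exp (s / d) ^ 2 = Real.exp (2 * s / d) := by
        rw [pow_two, ← Real.exp_add]; ring_nf
      rw [hexp2]
      refine le_trans (le_of_eq ?_) hq
      have : (2 * s / d) ^ 2 / 2 = 2 * a / d := by
        field_simp
        nlinarith [hs2]
      rw [this]
      field_simp
      ring
    calc Real.sqrt ((u + d) / d) ≤ Real.sqrt (Real.exp (s / d) ^ 2) :=
          Real.sqrt_le_sqrt h2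
      _ = Real.exp (s / d) := Real.sqrt_sq (Real.exp_pos _).le
  have hinv : (Real.sqrt ((d:ℝ) / (u + d)))⁻¹ = Real.sqrt ((u + d) / d) := by
    rw [← Real.sqrt_inv, inv_div]
  have hfinal : Real.exp (-t * (σ ^ 2 * ((d : ℝ) + 2 * s + 2 * a)))
      * ((Real.sqrt ((d:ℝ) / (u + d)))⁻¹) ^ d ≤ Real.exp (-a) := by
    rw [hinv, neg_mul, hte]
    have hpow : Real.sqrt ((u + d) / d) ^ d ≤ Real.exp s := by
      calc Real.sqrt ((u + d) / d) ^ d ≤ Real.exp (s / d) ^ d :=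
            pow_le_pow_left₀ (Real.sqrt_nonneg _) hkey d
        _ = Real.exp ((d:ℝ) * (s / d)) := (Real.exp_nat_mul _ d).symm
        _ = Real.exp s := by rw [mul_div_cancel₀ _ (ne_of_gt hdpos)]
    calc Real.exp (-(u / 2)) * Real.sqrt ((u + d) / d) ^ d
        ≤ Real.exp (-(u / 2)) * Real.exp s := by
          exact mul_le_mul_of_nonneg_left hpow (Real.exp_pos _).le
      _ = Real.exp (-(u / 2) + s) := (Real.exp_add _ _).symm
      _ = Real.exp (-a) := by rw [hu_def]; ring_nf
  calc μpi {x : Fin d → ℝ | σ ^ 2 * ((d : ℝ) + 2 * s + 2 * a) ≤ ∑ i, x i ^ 2}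
      = ENNReal.ofReal ((μpi {x : Fin d → ℝ |
          σ ^ 2 * ((d : ℝ) + 2 * s + 2 * a) ≤ ∑ i, x i ^ 2}).toReal) :=
        (ENNReal.ofReal_toReal (measure_ne_top _ _)).symm
    _ ≤ ENNReal.ofReal (Real.exp (-a)) :=
        ENNReal.ofReal_le_ofReal (le_trans hch hfinal)
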